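/- Let n ≥ 4 and k ≥ 3, and let α be an acyclic k-coloring of C⃗_{2n+1}⟨n⟩ having a color class C_j^α that is not a forbidden triangle. Then there is an acyclic k-coloring β whose j-th color class is C_j^β = {a, a+1, …, a+n−1} for some a ∈ Z_{2n+1}, with d(α,β) ≤ n − |C_j^α| if |C_j^α| ≤ 1, and d(α,β) ≤ n + 2 − |C_j^α| otherwise, where d denotes distance in the k-dicoloring graph of C⃗_{2n+1}⟨n⟩. -/

import Mathlib

def AcyclicOn {V : Type*} (A : V → V → Prop) (S : Set V) : Prop :=
  ∀ v, ¬ Relation.TransGen (fun x y => x ∈ S ∧ y ∈ S ∧ A x y) v v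

def IsAcyclicColoring {V : Type*} (A : V → V → Prop) (k : ℕ) (α : V → Fin k) : Prop :=
  ∀ c : Fin k, AcyclicOn A {v | α v = c}

section generic
variable {V : Type*} {A : V → V → Prop}

lemma acyclicOn_mono {S T : Set V} (hST : S ⊆ T) (hT : AcyclicOn A T) : AcyclicOn A S := by
  intro v hv
  exact hT v (Relation.TransGen.mono (p := fun x y => x ∈ T ∧ y ∈ T ∧ A x y)
    (fun x y (hxy : x ∈ S ∧ y ∈ S ∧ A x y) => ⟨hST hxy.1, hST hxy.2.1, hxy.2.2⟩) v v hv)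

lemma acyclicOn_of_rank {S : Set V} (f : V → ℕ)
    (h : ∀ x ∈ S, ∀ y ∈ S, A x y → f x < f y) : AcyclicOn A S := by
  intro v hv
  have h2 : Relation.TransGen (fun x y => f x < f y) v v :=
    Relation.TransGen.mono (p := fun x y => f x < f y)
      (fun x y (hh : x ∈ S ∧ y ∈ S ∧ A x y) => h x hh.1 y hh.2.1 hh.2.2) v v hv
  have h3 : Transitive (fun x y : V => f x < f y) := fun a b c h1 h2 => h1.trans h2
  rw [@Relation.transGen_eq_self _ _ ⟨h3⟩] at h2
  omega

private lemma transgen_restrict {S : Set V} {x : V}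
    (hx : ∀ y ∈ insert x S, ¬ A x y) :
    ∀ {p q : V}, Relation.TransGen (fun u v => u ∈ insert x S ∧ v ∈ insert x S ∧ A u v) p q →
      q = x ∨ Relation.TransGen (fun u v => u ∈ S ∧ v ∈ S ∧ A u v) p q := by
  intro p q hpq
  induction hpq with
  | @single b h =>
    rcases h with ⟨hp, hb, hA⟩
    by_cases hbx : b = x
    · exact Or.inl hbx
    · by_cases hpx : p = x
      · subst hpx; exact absurd hA (hx _ hb)
      · exact Or.inr (Relation.TransGen.single
          ⟨hp.resolve_left hpx, hb.resolve_left hbx, hA⟩)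
  | @tail b q' hpb hbq ih =>
    rcases hbq with ⟨hb, hq, hA⟩
    by_cases hbx : b = x
    · subst hbx; exact absurd hA (hx _ hq)
    · rcases ih with rfl | htg
      · exact absurd rfl hbx
      · by_cases hqx : q' = x
        · exact Or.inl hqx
        · exact Or.inr (htg.tail ⟨hb.resolve_left hbx, hq.resolve_left hqx, hA⟩)

lemma acyclicOn_insert_sink {S : Set V} {x : V} (hS : AcyclicOn A S)
    (hx : ∀ y ∈ insert x S, ¬ A x y) : AcyclicOn A (insert x S) := by
  intro v hv
  rcases transgen_restrict hx hv with rfl | htg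
  · obtain ⟨c, h, -⟩ := Relation.TransGen.head'_iff.1 hv
    exact hx _ h.2.1 h.2.2
  · exact hS v htg

lemma acyclicOn_flip {S : Set V} (h : AcyclicOn A S) :
    AcyclicOn (fun u v => A v u) S := by
  intro v hv
  apply h v
  rw [← Relation.transGen_swap]
  exact Relation.TransGen.mono (p := Function.swap fun x y => x ∈ S ∧ y ∈ S ∧ A x y)
    (fun a b (hh : a ∈ S ∧ b ∈ S ∧ A b a) => ⟨hh.2.1, hh.1, hh.2.2⟩) v v hv

lemma acyclicOn_insert_source {S : Set V} {x : V} (hS : AcyclicOn A S)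
    (hx : ∀ y ∈ insert x S, ¬ A y x) : AcyclicOn A (insert x S) := by
  have h1 : AcyclicOn (fun u v => A v u) (insert x S) :=
    acyclicOn_insert_sink (acyclicOn_flip hS) hx
  exact acyclicOn_flip h1

lemma cyc3 {S : Set V} (hS : AcyclicOn A S) {a b c : V} (ha : a ∈ S) (hb : b ∈ S)
    (hc : c ∈ S) (h1 : A a b) (h2 : A b c) (h3 : A c a) : False :=
  hS a (.head ⟨ha, hb, h1⟩ (.head ⟨hb, hc, h2⟩ (.single ⟨hc, ha, h3⟩)))

variable [DecidableEq V]

lemma isAcyclicColoring_update {k : ℕ} {γ : V → Fin k} (hγ : IsAcyclicColoring A k γ)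
    {x : V} {c : Fin k} (hc : AcyclicOn A (insert x {v | γ v = c})) :
    IsAcyclicColoring A k (Function.update γ x c) := by
  intro c'
  by_cases h : c' = c
  · subst h
    refine acyclicOn_mono ?_ hc
    intro v hv
    by_cases hvx : v = x
    · exact Or.inl hvx
    · right; simpa [Function.update_of_ne hvx] using hv
  · refine acyclicOn_mono ?_ (hγ c')
    intro v hv
    by_cases hvx : v = x
    · subst hvx; simp only [Set.mem_setOf_eq, Function.update_self] at hv; exact absurd hv.symm h
    · simpa [Function.update_of_ne hvx] using hv
end generic
def DicolGraph {V : Type*} (A : V → V → Prop) (k : ℕ) :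
    SimpleGraph {α : V → Fin k // IsAcyclicColoring A k α} where
  Adj α β := ∃! v, α.1 v ≠ β.1 v
  symm := by
    constructor
    rintro α β ⟨v, hv, hu⟩
    exact ⟨v, Ne.symm hv, fun w hw => hu w (Ne.symm hw)⟩
  loopless := by
    constructor
    rintro α ⟨v, hv, -⟩
    exact hv rfl

section walkstuff
variable {V : Type*} [DecidableEq V] {A : V → V → Prop} {k : ℕ}

lemma adj_update {γ : V → Fin k} (hγ : IsAcyclicColoring A k γ) {x : V} {c : Fin k}
    (hne : γ x ≠ c) (h2 : IsAcyclicColoring A k (Function.update γ x c)) :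
    (DicolGraph A k).Adj ⟨γ, hγ⟩ ⟨Function.update γ x c, h2⟩ := by
  refine ⟨x, ?_, ?_⟩
  · simpa using hne
  · intro y hy
    by_contra hyx
    exact hy (show γ y = Function.update γ x c y by rw [Function.update_of_ne hyx])

lemma fill (j : Fin k) (Q : Set V) (hQfin : Q.Finite) (hQ : AcyclicOn A Q) :
    ∀ (N : ℕ) (γ : V → Fin k) (hγ : IsAcyclicColoring A k γ),
      {v | γ v = j} ⊆ Q → (Q \ {v | γ v = j}).ncard = N →
      ∃ (δ : V → Fin k) (hδ : IsAcyclicColoring A k δ),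
        {v | δ v = j} = Q ∧ (∀ v, v ∉ Q → δ v = γ v) ∧
        ∃ p : (DicolGraph A k).Walk ⟨γ, hγ⟩ ⟨δ, hδ⟩, p.length = N := by
  intro N
  induction N with
  | zero =>
    intro γ hγ hsub h0
    have hfin : (Q \ {v | γ v = j}).Finite := hQfin.diff
    have hemp : Q \ {v | γ v = j} = ∅ := (Set.ncard_eq_zero hfin).1 h0
    have heq : {v | γ v = j} = Q :=
      subset_antisymm hsub (fun v hv => by_contra fun hc => (hemp ▸ ⟨hv, hc⟩ : v ∈ (∅ : Set V)))
    exact ⟨γ, hγ, heq, fun v _ => rfl, ⟨SimpleGraph.Walk.nil, rfl⟩⟩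
  | succ N ih =>
    intro γ hγ hsub hN
    obtain ⟨q, hq⟩ : (Q \ {v | γ v = j}).Nonempty :=
      Set.nonempty_of_ncard_ne_zero (by omega)
    have hγq : γ q ≠ j := hq.2
    set γ' := Function.update γ q j with hγ'def
    have hcls : {v | γ' v = j} = insert q {v | γ v = j} := by
      ext v
      by_cases hv : v = q
      · subst hv; simp [hγ'def]
      · simp [hγ'def, Function.update_of_ne hv, hv]
    have hsub' : {v | γ' v = j} ⊆ Q := by
      rw [hcls]; exact Set.insert_subset hq.1 hsub
    have hγ'a : IsAcyclicColoring A k γ' :=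
      isAcyclicColoring_update hγ (acyclicOn_mono (Set.insert_subset hq.1 hsub) hQ)
    have hN' : (Q \ {v | γ' v = j}).ncard = N := by
      have hd : Q \ {v | γ' v = j} = (Q \ {v | γ v = j}) \ {q} := by
        rw [hcls]; ext v; simp only [Set.mem_diff, Set.mem_insert_iff, Set.mem_singleton_iff]; tauto
      rw [hd, Set.ncard_diff_singleton_of_mem hq]
      omega
    obtain ⟨δ, hδ, hδcls, hδout, p, hp⟩ := ih γ' hγ'a hsub' hN'
    refine ⟨δ, hδ, hδcls, ?_, ?_⟩
    · intro v hv
      rw [hδout v hv, hγ'def, Function.update_of_ne (fun he => hv (by rw [he]; exact hq.1))]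
    · exact ⟨SimpleGraph.Walk.cons (adj_update hγ hγq hγ'a) p, by simp [hp]⟩
end walkstuff
def CycArc (n : ℕ) (a b : ZMod (2*n+1)) : Prop := (b - a).val ∈ Finset.Icc 1 n

def RevArc (n : ℕ) (a b : ZMod (2*n+1)) : Prop :=
  (b - a).val ∈ Finset.Icc 1 (n-1) ∨ (b - a).val = n + 1

def ForbiddenTriangle (n : ℕ) (S : Set (ZMod (2*n+1))) : Prop :=
  ∃ i : ZMod (2*n+1), S = {i, i + n, i + n + 1}

section zmodstuff
variable {n : ℕ}

lemma revArc_val (u v : ZMod (2*n+1)) :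
    RevArc n u v ↔ ((1 ≤ (v - u).val ∧ (v - u).val ≤ n - 1) ∨ (v - u).val = n + 1) := by
  simp [RevArc, Finset.mem_Icc]

lemma zround (v : ZMod (2*n+1)) : ((v.val : ℕ) : ZMod (2*n+1)) = v :=
  (ZMod.natCast_val v).trans (ZMod.cast_id _ _)

lemma zval_inj {u v : ZMod (2*n+1)} (h : u.val = v.val) : u = v := by
  rw [← zround u, ← zround v, h]

lemma zdecomp (u v : ZMod (2*n+1)) : u = v + (((u - v).val : ℕ) : ZMod (2*n+1)) := by
  rw [zround]; ring

lemma zval_sub (u v : ZMod (2*n+1)) :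
    (u - v).val = if v.val ≤ u.val then u.val - v.val else u.val + (2*n+1) - v.val := by
  have hu := ZMod.val_lt u; have hv := ZMod.val_lt v
  have h1 : u - v = ((u.val + (2*n+1) - v.val : ℕ) : ZMod (2*n+1)) := by
    rw [Nat.cast_sub (by omega), Nat.cast_add, zround, zround, ZMod.natCast_self, add_zero]
  rw [h1, ZMod.val_natCast]
  split_ifs with h
  · have h2 : u.val + (2*n+1) - v.val = (2*n+1) + (u.val - v.val) := by omega
    rw [h2, Nat.add_mod_left, Nat.mod_eq_of_lt (by omega)]
  · rw [Nat.mod_eq_of_lt (by omega)]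

lemma zval_rev {u v : ZMod (2*n+1)} (h : u ≠ v) :
    (u - v).val = 2*n+1 - (v - u).val := by
  have hne : u.val ≠ v.val := fun he => h (zval_inj he)
  have hu := ZMod.val_lt u; have hv := ZMod.val_lt v
  rw [zval_sub, zval_sub]; split_ifs <;> omega

lemma zval_shift (i : ZMod (2*n+1)) (s t : ℕ) (hs : s < 2*n+1) (ht : t < 2*n+1) :
    ((i + (s : ZMod (2*n+1))) - (i + (t : ZMod (2*n+1)))).val
      = if t ≤ s then s - t else s + (2*n+1) - t := by
  have h1 : (i + (s : ZMod (2*n+1))) - (i + (t : ZMod (2*n+1)))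
      = (s : ZMod (2*n+1)) - (t : ZMod (2*n+1)) := by ring
  rw [h1, zval_sub, ZMod.val_cast_of_lt hs, ZMod.val_cast_of_lt ht]

lemma window_ncard (hn : 1 ≤ n) (a : ZMod (2*n+1)) :
    {v : ZMod (2*n+1) | (v - a).val < n}.ncard = n := by
  have hset : {v : ZMod (2*n+1) | (v - a).val < n}
      = ↑((Finset.range n).image (fun t : ℕ => a + (t : ZMod (2*n+1)))) := by
    ext v
    simp only [Set.mem_setOf_eq, Finset.coe_image, Set.mem_image, Finset.mem_coe,
      Finset.mem_range]
    constructor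
    · intro hv
      exact ⟨(v - a).val, hv, (zdecomp v a).symm⟩
    · rintro ⟨t, ht, rfl⟩
      have : (a + (t : ZMod (2*n+1)) - a) = (t : ZMod (2*n+1)) := by ring
      rw [this, ZMod.val_cast_of_lt (by omega)]; exact ht
  rw [hset, Set.ncard_coe_finset, Finset.card_image_of_injOn, Finset.card_range]
  intro s hs t ht hst
  simp only [Finset.mem_coe, Finset.mem_range] at hs ht
  have h2 : (s : ZMod (2*n+1)) = (t : ZMod (2*n+1)) := add_left_cancel hst
  have h3 := congrArg ZMod.val h2
  rwa [ZMod.val_cast_of_lt (by omega), ZMod.val_cast_of_lt (by omega)] at h3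

lemma window_acyclic (hn : 4 ≤ n) (a : ZMod (2*n+1)) :
    AcyclicOn (RevArc n) {v | (v - a).val < n} := by
  apply acyclicOn_of_rank (fun v => (v - a).val)
  intro u hu v hv harc
  simp only [Set.mem_setOf_eq] at hu hv
  rw [revArc_val] at harc
  have h1 : v - u = (v - a) - (u - a) := by ring
  rw [h1, zval_sub] at harc
  split_ifs at harc <;> omega

lemma claimA (hn : 4 ≤ n) (S : Set (ZMod (2*n+1))) (hS : AcyclicOn (RevArc n) S)
    (i : ZMod (2*n+1)) (hi : i ∈ S) (hx : i + (n : ZMod (2*n+1)) ∈ S) :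
    ∀ v ∈ S, (v - i).val = 0 ∨ n ≤ (v - i).val := by
  intro v hv
  by_contra hcon
  push_neg at hcon
  obtain ⟨h0, hlt⟩ := hcon
  set t := (v - i).val with htdef
  have hveq : v = i + (t : ZMod (2*n+1)) := zdecomp v i
  have harc1 : RevArc n i v := by
    rw [revArc_val]; left; omega
  have harc2 : RevArc n v (i + (n : ZMod (2*n+1))) := by
    rw [revArc_val]
    have : (i + (n : ZMod (2*n+1))) - v = ((n:ℕ) : ZMod (2*n+1)) - ((t:ℕ) : ZMod (2*n+1)) := by
      rw [hveq]; ring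
    rw [this, zval_sub, ZMod.val_cast_of_lt (by omega), ZMod.val_cast_of_lt (by omega)]
    split_ifs <;> omega
  have harc3 : RevArc n (i + (n : ZMod (2*n+1))) i := by
    rw [revArc_val]
    have : i - (i + (n : ZMod (2*n+1)))
        = (i + ((0:ℕ) : ZMod (2*n+1))) - (i + ((n:ℕ) : ZMod (2*n+1))) := by push_cast; ring
    rw [this, zval_shift i 0 n (by omega) (by omega)]
    split_ifs <;> omega
  exact cyc3 hS hi hv hx harc1 harc2 harc3

lemma claimB (hn : 4 ≤ n) (S : Set (ZMod (2*n+1))) (hS : AcyclicOn (RevArc n) S)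
    (hnf : ¬ ForbiddenTriangle n S)
    (i : ZMod (2*n+1)) (hi : i ∈ S) (hx : i + (n : ZMod (2*n+1)) ∈ S) :
    (i + ((n+1 : ℕ) : ZMod (2*n+1))) ∉ S := by
  intro hu1
  apply hnf
  refine ⟨i, subset_antisymm ?_ ?_⟩
  · intro v hv
    have hA := claimA hn S hS i hi hx v hv
    set t := (v - i).val with htdef
    have htlt : t < 2*n+1 := ZMod.val_lt _
    have hveq : v = i + (t : ZMod (2*n+1)) := zdecomp v i
    simp only [Set.mem_insert_iff, Set.mem_singleton_iff]
    -- cases on t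
    by_cases h0 : t = 0
    · left
      have : v - i = 0 := by
        have : (v - i).val = 0 := h0
        rwa [ZMod.val_eq_zero] at this
      have := sub_eq_zero.mp this; tauto
    by_cases hn' : t = n
    · right; left; rw [hveq, hn']
    by_cases hn1 : t = n+1
    · right; right; rw [hveq, hn1]; push_cast; ring
    -- remaining: t ∈ [n+2, 2n]: cycle i → i+(n+1) → v → i
    exfalso
    have ht2 : n + 2 ≤ t ∧ t ≤ 2*n := by omega
    have harc1 : RevArc n i (i + ((n+1:ℕ) : ZMod (2*n+1))) := by
      rw [revArc_val]
      have : (i + ((n+1:ℕ) : ZMod (2*n+1))) - i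
          = (i + ((n+1:ℕ) : ZMod (2*n+1))) - (i + ((0:ℕ) : ZMod (2*n+1))) := by push_cast; ring
      rw [this, zval_shift i (n+1) 0 (by omega) (by omega)]
      split_ifs <;> omega
    have harc2 : RevArc n (i + ((n+1:ℕ) : ZMod (2*n+1))) v := by
      rw [revArc_val, hveq, zval_shift i t (n+1) (by omega) (by omega)]
      split_ifs <;> omega
    have harc3 : RevArc n v i := by
      rw [revArc_val]
      have : i - v = (i + ((0:ℕ) : ZMod (2*n+1))) - (i + (t : ZMod (2*n+1))) := by
        push_cast; rw [hveq]; ring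
      rw [this, zval_shift i 0 t (by omega) (by omega)]
      split_ifs <;> omega
    exact cyc3 hS hi hu1 hv harc1 harc2 harc3
  · intro v hv
    simp only [Set.mem_insert_iff, Set.mem_singleton_iff] at hv
    rcases hv with rfl | rfl | rfl
    · exact hi
    · exact hx
    · have : i + (n : ZMod (2*n+1)) + 1 = i + ((n+1:ℕ) : ZMod (2*n+1)) := by push_cast; ring
      rw [this]; exact hu1

lemma claimC (hn : 4 ≤ n) (S : Set (ZMod (2*n+1))) (hS : AcyclicOn (RevArc n) S)
    (hnf : ¬ ForbiddenTriangle n S)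
    (i : ZMod (2*n+1)) (hi : i ∈ S) (hx : i + (n : ZMod (2*n+1)) ∈ S) :
    (i + ((2*n : ℕ) : ZMod (2*n+1))) ∉ S := by
  intro h2n
  have hx2 : (i + (n : ZMod (2*n+1))) + (n : ZMod (2*n+1)) ∈ S := by
    have : (i + (n : ZMod (2*n+1))) + (n : ZMod (2*n+1)) = i + ((2*n:ℕ) : ZMod (2*n+1)) := by
      push_cast; ring
    rw [this]; exact h2n
  have hB := claimB hn S hS hnf (i + (n : ZMod (2*n+1))) hx hx2
  apply hB
  have : (i + (n : ZMod (2*n+1))) + ((n+1:ℕ) : ZMod (2*n+1)) = i := by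
    have h0 : ((2*n+1 : ℕ) : ZMod (2*n+1)) = 0 := ZMod.natCast_self _
    push_cast at h0 ⊢
    linear_combination h0
  rw [this]; exact hi

lemma no_badpair_window (hn : 4 ≤ n) (S : Set (ZMod (2*n+1)))
    (hS : AcyclicOn (RevArc n) S)
    (hbp : ∀ u ∈ S, ∀ v ∈ S, (v - u).val ≠ n) :
    ∃ a, S ⊆ {v | (v - a).val < n} := by
  rcases S.eq_empty_or_nonempty with rfl | ⟨p, hp⟩
  · exact ⟨0, by simp⟩
  set T := {t : ℕ | n ≤ t ∧ ∃ v ∈ S, (v - p).val = t} with hT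
  by_cases hTne : T.Nonempty
  · set g := sInf T with hg
    obtain ⟨hgn, q, hq, hqg⟩ := Nat.sInf_mem hTne
    rw [← hg] at hgn hqg
    have hqp : q ≠ p := by
      intro h; rw [h, sub_self, ZMod.val_zero] at hqg; omega
    have hg2n : g ≤ 2*n := by have := ZMod.val_lt (q - p); omega
    have hgO : g ≠ n := by rw [← hqg]; exact hbp p hp q hq
    have hgI : g ≠ n + 1 := by
      intro hgeq
      apply hbp q hq p hp
      rw [zval_rev hqp.symm, hqg, hgeq]  -- (p - q).val = 2n+1 - (n+1) = n
      omega
    have hgrange : n + 2 ≤ g := by omega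
    refine ⟨q, fun v hv => ?_⟩
    show (v - q).val < n
    set t := (v - p).val with htdef
    have htlt : t < 2*n+1 := ZMod.val_lt _
    by_cases hvq : v = q
    · rw [hvq, sub_self, ZMod.val_zero]; omega
    have hvqval : (v - q).val = if g ≤ t then t - g else t + (2*n+1) - g := by
      have h1 : v - q = (v - p) - (q - p) := by ring
      rw [h1, zval_sub, ← htdef, hqg]
    by_cases htg : g ≤ t
    · -- t > g since v ≠ q
      have : t ≠ g := by
        intro he
        apply hvq
        have h2 : v - p = q - p := zval_inj (by rw [← htdef, hqg]; exact he)
        exact sub_left_inj.mp h2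
      rw [hvqval, if_pos htg]; omega
    · push_neg at htg
      have htn : t < n := by
        by_contra hc
        push_neg at hc
        have : t ∈ T := ⟨hc, v, hv, rfl⟩
        have := Nat.sInf_le this
        omega
      by_cases ht0 : t = 0
      · -- v = p
        have hvp : v = p := by
          have : v - p = 0 := by rwa [← ZMod.val_eq_zero, ← htdef]
          exact sub_eq_zero.mp this
        rw [hvp, zval_rev hqp.symm, hqg]
        omega
      · -- 1 ≤ t ≤ n - 1
        have hqv : (q - v).val = g - t := by
          have h1 : q - v = (q - p) - (v - p) := by ring
          rw [h1, zval_sub, ← htdef, hqg, if_pos (by omega)]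
        by_cases hbp1 : g - t = n
        · exact absurd (hqv.trans hbp1) (hbp v hv q hq)
        by_cases hcyc : (1 ≤ g - t ∧ g - t ≤ n - 1) ∨ g - t = n + 1
        · exfalso
          have harc1 : RevArc n p v := by rw [revArc_val, ← htdef]; left; omega
          have harc2 : RevArc n v q := by rw [revArc_val, hqv]; tauto
          have harc3 : RevArc n q p := by
            rw [revArc_val, zval_rev hqp.symm, hqg]; left; omega
          exact cyc3 hS hp hv hq harc1 harc2 harc3
        · -- g - t ≥ n + 2
          push_neg at hcyc
          rw [hvqval, if_neg (by omega)]
          omega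
  · refine ⟨p, fun v hv => ?_⟩
    show (v - p).val < n
    by_contra hc
    push_neg at hc
    exact hTne ⟨(v - p).val, hc, v, hv, rfl⟩
end zmodstuff
theorem stmt11 (n k : ℕ) (hn : 4 ≤ n) (hk : 3 ≤ k)
    (α : ZMod (2*n+1) → Fin k) (hα : IsAcyclicColoring (RevArc n) k α)
    (j : Fin k) (hnf : ¬ ForbiddenTriangle n {v | α v = j}) :
    ∃ (β : ZMod (2*n+1) → Fin k) (hβ : IsAcyclicColoring (RevArc n) k β)
      (a : ZMod (2*n+1)),
      {v | β v = j} = {v | (v - a).val < n} ∧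
      (DicolGraph (RevArc n) k).Reachable ⟨α, hα⟩ ⟨β, hβ⟩ ∧
      (Set.ncard {v | α v = j} ≤ 1 →
        (DicolGraph (RevArc n) k).dist ⟨α, hα⟩ ⟨β, hβ⟩ ≤ n - Set.ncard {v | α v = j}) ∧
      (2 ≤ Set.ncard {v | α v = j} →
        (DicolGraph (RevArc n) k).dist ⟨α, hα⟩ ⟨β, hβ⟩
          ≤ n + 2 - Set.ncard {v | α v = j}) := by
  classical
  set S := {v | α v = j} with hSdef
  have hS : AcyclicOn (RevArc n) S := hα j
  by_cases hbp : ∃ i, i ∈ S ∧ i + (n : ZMod (2*n+1)) ∈ S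
  case neg =>
    have hbp' : ∀ u ∈ S, ∀ v ∈ S, (v - u).val ≠ n := by
      intro u hu v hv hval
      apply hbp
      refine ⟨u, hu, ?_⟩
      have h2 : u + (n : ZMod (2*n+1)) = v := by
        calc u + (n : ZMod (2*n+1)) = u + (((v - u).val : ℕ) : ZMod (2*n+1)) := by rw [hval]
        _ = v := (zdecomp v u).symm
      rw [h2]; exact hv
    obtain ⟨a, hSsub⟩ := no_badpair_window hn S hS hbp'
    obtain ⟨β, hβ, hcls, hout, p, hp⟩ :=
      fill j {v : ZMod (2*n+1) | (v - a).val < n} (Set.toFinite _) (window_acyclic hn a)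
        (({v : ZMod (2*n+1) | (v - a).val < n} \ S).ncard) α hα hSsub rfl
    have hmn : S.ncard ≤ n := by
      have h1 := Set.ncard_le_ncard hSsub (Set.toFinite _)
      rwa [window_ncard (by omega) a] at h1
    have hlen : p.length = n - S.ncard := by
      rw [hp, Set.ncard_diff hSsub (Set.toFinite _), window_ncard (by omega) a]
    have hd := SimpleGraph.dist_le p
    rw [hlen] at hd
    exact ⟨β, hβ, a, hcls, ⟨p⟩, fun _ => by omega, fun _ => by omega⟩
  case pos =>
    obtain ⟨i, hi, hxS⟩ := hbp
    have hA := claimA hn S hS i hi hxS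
    have hB := claimB hn S hS hnf i hi hxS
    have hC := claimC hn S hS hnf i hi hxS
    set x := i + (n : ZMod (2*n+1)) with hxdef
    set a := i + ((n+2 : ℕ) : ZMod (2*n+1)) with hadef
    set w := i + ((2*n : ℕ) : ZMod (2*n+1)) with hwdef
    set u1 := i + ((n+1 : ℕ) : ZMod (2*n+1)) with hu1def
    set J := {v : ZMod (2*n+1) | (v - a).val < n} with hJdef
    -- basic val facts
    have hxa : (x - a).val = 2*n - 1 := by
      rw [hxdef, hadef, zval_shift i n (n+2) (by omega) (by omega)]
      split_ifs <;> omega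
    have hxJ : x ∉ J := by
      simp only [hJdef, Set.mem_setOf_eq, hxa]
      omega
    have hwa : (w - a).val = n - 2 := by
      rw [hwdef, hadef, zval_shift i (2*n) (n+2) (by omega) (by omega)]
      split_ifs <;> omega
    have hwJ : w ∈ J := by
      simp only [hJdef, Set.mem_setOf_eq, hwa]; omega
    have hxi : (x - i).val = n := by
      have h1 : x - i = (i + ((n:ℕ) : ZMod (2*n+1))) - (i + ((0:ℕ) : ZMod (2*n+1))) := by
        rw [hxdef]; push_cast; ring
      rw [h1, zval_shift i n 0 (by omega) (by omega)]
      split_ifs <;> omega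
    have hix : i ≠ x := by
      intro h
      rw [← h, sub_self, ZMod.val_zero] at hxi
      omega
    -- S is contained in Q1 = insert x (J \ {w})
    have hSsub1 : S ⊆ insert x (J \ {w}) := by
      intro v hv
      by_cases hvx : v = x
      · rw [hvx]; exact Set.mem_insert _ _
      have htlt : (v - i).val < 2*n+1 := ZMod.val_lt _
      set t := (v - i).val with htdef
      have hveq : v = i + ((t : ℕ) : ZMod (2*n+1)) := zdecomp v i
      have htcases := hA v hv
      have htn : t ≠ n := by
        intro he; exact hvx (by rw [hveq, he, ← hxdef])
      have htn1 : t ≠ n+1 := by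
        intro he; exact hB (by rw [hu1def, ← he, ← hveq]; exact hv)
      have htn2 : t ≠ 2*n := by
        intro he
        apply hC
        have h5 : v = w := by rw [hveq, he, hwdef]
        rwa [h5] at hv
      have hva : (v - a).val = if n+2 ≤ t then t - (n+2) else t + (2*n+1) - (n+2) := by
        have h1 : v - a = (i + ((t:ℕ) : ZMod (2*n+1))) - (i + (((n+2):ℕ) : ZMod (2*n+1))) := by
          rw [← hveq, hadef]
        rw [h1, zval_shift i t (n+2) (by omega) (by omega)]
      refine Set.mem_insert_iff.2 (Or.inr ⟨?_, ?_⟩)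
      · simp only [hJdef, Set.mem_setOf_eq, hva]
        split_ifs <;> omega
      · intro he
        rw [he] at hv
        exact hC hv
    -- Q1 is acyclic (x is a source)
    have hsrc : ∀ y ∈ insert x (J \ {w}), ¬ RevArc n y x := by
      intro y hy harc
      rw [revArc_val] at harc
      rcases hy with rfl | ⟨hyJ, hyw⟩
      · rw [sub_self, ZMod.val_zero] at harc; omega
      · have hs : (y - a).val < n := hyJ
        set s := (y - a).val with hsdef
        have hxy : (x - y).val = 2*n - 1 - s := by
          have h1 : x - y = (x - a) - (y - a) := by ring
          rw [h1, zval_sub, hxa, ← hsdef]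
          split_ifs <;> omega
        rw [hxy] at harc
        rcases harc with ⟨h1, h2⟩ | h3
        · omega
        · apply hyw
          have hseq : s = n - 2 := by omega
          have h4 : y - a = w - a := zval_inj (by rw [← hsdef, hwa]; exact hseq)
          exact sub_left_inj.mp h4
    have hQ1 : AcyclicOn (RevArc n) (insert x (J \ {w})) :=
      acyclicOn_insert_source
        (acyclicOn_mono Set.diff_subset (window_acyclic hn a)) hsrc
    -- phase 1: fill up to Q1
    obtain ⟨γ1, hγ1, hcls1, hout1, p1, hp1⟩ :=
      fill j (insert x (J \ {w})) (Set.toFinite _) hQ1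
        ((insert x (J \ {w}) \ S).ncard) α hα hSsub1 rfl
    -- choose the color c for the removal step
    obtain ⟨c, hcj, hcu⟩ : ∃ c : Fin k, c ≠ j ∧ c ≠ α u1 := by
      have h1 : ({j, α u1} : Finset (Fin k)).card ≤ 2 :=
        (Finset.card_insert_le _ _).trans (by simp)
      have h2 : (({j, α u1} : Finset (Fin k))ᶜ).Nonempty := by
        rw [← Finset.card_pos, Finset.card_compl]
        simp only [Fintype.card_fin]
        omega
      obtain ⟨c, hc⟩ := h2
      simp only [Finset.mem_compl, Finset.mem_insert, Finset.mem_singleton, not_or] at hc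
      exact ⟨c, hc.1, hc.2⟩
    have hγ1x : γ1 x = j := by
      have h1 : x ∈ {v | γ1 v = j} := by rw [hcls1]; exact Set.mem_insert _ _
      exact h1
    -- x is a sink for color class c
    have hsink : ∀ y ∈ insert x {v | γ1 v = c}, ¬ RevArc n x y := by
      intro y hy harc
      rw [revArc_val] at harc
      rcases hy with rfl | hyc
      · rw [sub_self, ZMod.val_zero] at harc; omega
      · have hyc' : γ1 y = c := hyc
        have hyQ1 : y ∉ insert x (J \ {w}) := by
          intro hmem
          have h1 : y ∈ {v | γ1 v = j} := by rw [hcls1]; exact hmem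
          have h2 : γ1 y = j := h1
          rw [h2] at hyc'
          exact hcj hyc'.symm
        have hyu1 : y ≠ u1 := by
          intro he
          have h3 : α y = c := by rw [← hout1 y hyQ1]; exact hyc'
          exact hcu (by rw [← he]; exact h3.symm)
        have hdlt : (y - x).val < 2*n+1 := ZMod.val_lt _
        set d := (y - x).val with hddef
        have hyeq : y = x + ((d : ℕ) : ZMod (2*n+1)) := zdecomp y x
        by_cases hd1 : d = 1
        · exact hyu1 (by rw [hyeq, hd1, hu1def, hxdef]; push_cast; ring)
        by_cases hdn1 : d = n+1
        · apply hyQ1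
          have hyi : y = i := by
            rw [hyeq, hdn1, hxdef]
            have h0 : ((2*n+1 : ℕ) : ZMod (2*n+1)) = 0 := ZMod.natCast_self _
            push_cast at h0 ⊢
            linear_combination h0
          rw [hyi]; exact hSsub1 hi
        · have hd2 : 2 ≤ d ∧ d ≤ n - 1 := by rcases harc with h | h <;> omega
          have hya : (y - a).val = d - 2 := by
            have h1 : y - a
                = (i + ((n+d : ℕ) : ZMod (2*n+1))) - (i + (((n+2):ℕ) : ZMod (2*n+1))) := by
              rw [hyeq, hxdef, hadef]; push_cast; ring
            rw [h1, zval_shift i (n+d) (n+2) (by omega) (by omega)]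
            split_ifs <;> omega
          apply hyQ1
          refine Set.mem_insert_iff.2 (Or.inr ⟨?_, ?_⟩)
          · simp only [hJdef, Set.mem_setOf_eq, hya]; omega
          · intro he; rw [he, hwa] at hya; omega
    have hacyc_c : AcyclicOn (RevArc n) (insert x {v | γ1 v = c}) :=
      acyclicOn_insert_sink (hγ1 c) hsink
    have hγ1xc : γ1 x ≠ c := by rw [hγ1x]; exact fun h => hcj h.symm
    set γ2 := Function.update γ1 x c with hγ2def
    have hγ2 : IsAcyclicColoring (RevArc n) k γ2 := isAcyclicColoring_update hγ1 hacyc_c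
    have hadj : (DicolGraph (RevArc n) k).Adj ⟨γ1, hγ1⟩ ⟨γ2, hγ2⟩ := adj_update hγ1 hγ1xc hγ2
    have hcls2 : {v | γ2 v = j} = J \ {w} := by
      ext v
      by_cases hvx : v = x
      · subst hvx
        simp only [Set.mem_setOf_eq, hγ2def, Function.update_self]
        constructor
        · intro h; exact absurd h hcj
        · intro h; exact absurd h.1 hxJ
      · simp only [Set.mem_setOf_eq, hγ2def, Function.update_of_ne hvx]
        have h1 : (γ1 v = j) ↔ v ∈ {u | γ1 u = j} := Iff.rfl
        rw [h1, hcls1]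
        simp only [Set.mem_insert_iff]
        constructor
        · rintro (rfl | h)
          · exact absurd rfl hvx
          · exact h
        · intro h; right; exact h
    have hsub2 : {v | γ2 v = j} ⊆ J := by rw [hcls2]; exact Set.diff_subset
    have hN2 : (J \ {v | γ2 v = j}).ncard = 1 := by
      rw [hcls2]
      have h1 : J \ (J \ {w}) = {w} := by
        ext v
        simp only [Set.mem_diff, Set.mem_singleton_iff, not_and, not_not]
        constructor
        · rintro ⟨h1, h2⟩
          by_contra h3
          exact h3 (h2 h1)
        · rintro rfl; exact ⟨hwJ, fun _ => rfl⟩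
      rw [h1, Set.ncard_singleton]
    obtain ⟨β, hβ, hclsβ, houtβ, p2, hp2⟩ :=
      fill j J (Set.toFinite _) (by rw [hJdef]; exact window_acyclic hn a) 1 γ2 hγ2 hsub2 hN2
    set p : (DicolGraph (RevArc n) k).Walk ⟨α, hα⟩ ⟨β, hβ⟩ :=
      p1.append (SimpleGraph.Walk.cons hadj p2) with hpdef
    have hplen : p.length = (insert x (J \ {w}) \ S).ncard + 2 := by
      rw [hpdef, SimpleGraph.Walk.length_append, SimpleGraph.Walk.length_cons, hp1, hp2]
    have hJcard : J.ncard = n := window_ncard (by omega) a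
    have hQ1card : (insert x (J \ {w})).ncard = n := by
      rw [Set.ncard_insert_of_notMem (fun h => hxJ h.1) (Set.toFinite _),
        Set.ncard_diff_singleton_of_mem hwJ, hJcard]
      omega
    have hmn : S.ncard ≤ n := by
      have h1 := Set.ncard_le_ncard hSsub1 (Set.toFinite _)
      rwa [hQ1card] at h1
    have hm2 : 2 ≤ S.ncard := by
      have h2 : 1 < S.ncard := (Set.one_lt_ncard (Set.toFinite _)).2 ⟨i, hi, x, hxS, hix⟩
      omega
    have hdiff : (insert x (J \ {w}) \ S).ncard = n - S.ncard := by
      rw [Set.ncard_diff hSsub1 (Set.toFinite _), hQ1card]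
    have hd := SimpleGraph.dist_le p
    rw [hplen, hdiff] at hd
    exact ⟨β, hβ, a, hclsβ.trans hJdef, ⟨p⟩, fun h => by omega, fun h => by omega⟩
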